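/- Let 2 ≤ d ≤ d' and 1 ≤ m < d be integers. If there exists an m×d partial Hadamard matrix that cannot be extended to an (m+1)×d partial Hadamard matrix, then there exists a (d(d'−1)+m)-number USV1Bd in M_{d×d'}, i.e., a (d(d'−1)+m)-number unextendible maximally entangled basis (UMEB) in ℂ^d ⊗ ℂ^{d'}. -/

import Mathlib

open Matrix

open Complex

namespace UMEBAux

def col (d' : ℕ) (hd' : 0 < d') (i t : ℕ) : Fin d' := ⟨(i + t) % d', Nat.mod_lt _ hd'⟩

def sh (d d' : ℕ) (hd' : 0 < d') (f : Fin d → ℂ) (t : ℕ) : Matrix (Fin d) (Fin d') ℂ :=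
  Matrix.of fun i j => if j = col d' hd' i t then f i else 0

variable {d d' : ℕ} (hd' : 0 < d')

lemma col_inj_left {i i' t : ℕ} (hi : i < d') (hi' : i' < d')
    (h : col d' hd' i t = col d' hd' i' t) : i = i' := by
  have h2 : (i + t) % d' = (i' + t) % d' := congrArg Fin.val h
  have h3 : i ≡ i' [MOD d'] := Nat.ModEq.add_right_cancel' t h2
  rwa [Nat.ModEq, Nat.mod_eq_of_lt hi, Nat.mod_eq_of_lt hi'] at h3

lemma col_inj_right {i t s : ℕ} (ht : t < d') (hs : s < d')
    (h : col d' hd' i t = col d' hd' i s) : t = s := by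
  have h2 : (i + t) % d' = (i + s) % d' := congrArg Fin.val h
  have h3 : t ≡ s [MOD d'] := Nat.ModEq.add_left_cancel' i h2
  rwa [Nat.ModEq, Nat.mod_eq_of_lt ht, Nat.mod_eq_of_lt hs] at h3

lemma col_surj (i : ℕ) (hi : i < d') (j : Fin d') :
    ∃ t < d', col d' hd' i t = j := by
  refine ⟨((j : ℕ) + d' - i) % d', Nat.mod_lt _ hd', ?_⟩
  apply Fin.ext
  show (i + ((j : ℕ) + d' - i) % d') % d' = (j : ℕ)
  have hij : i ≤ (j : ℕ) + d' := le_of_lt (lt_of_lt_of_le hi (Nat.le_add_left _ _))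
  calc (i + ((j : ℕ) + d' - i) % d') % d'
      = (i + ((j : ℕ) + d' - i)) % d' := Nat.ModEq.add_left i (Nat.mod_modEq _ _)
    _ = ((j : ℕ) + d') % d' := by rw [Nat.add_sub_cancel' hij]
    _ = (j : ℕ) := by rw [Nat.add_mod_right, Nat.mod_eq_of_lt j.isLt]

lemma sum_ite_ite (a b : Fin d') (x y : ℂ) :
    ∑ j : Fin d', (if j = a then x else 0) * (if j = b then y else 0)
      = if a = b then x * y else 0 := by
  rw [Finset.sum_eq_single a]
  · simp only [if_pos rfl]
    by_cases h : a = b <;> simp [h]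
  · intro j _ hj; simp [hj]
  · intro ha; simp at ha

lemma sh_mul_conjTranspose (hdd : d ≤ d') (f : Fin d → ℂ) (hf : ∀ i, ‖f i‖ = 1)
    (t : ℕ) : sh d d' hd' f t * (sh d d' hd' f t)ᴴ = 1 := by
  ext i i'
  rw [Matrix.mul_apply]
  simp only [sh, conjTranspose_apply, Matrix.of_apply]
  simp only [apply_ite (star : ℂ → ℂ), star_zero]
  rw [sum_ite_ite]
  by_cases hii : i = i'
  · subst hii
    rw [if_pos rfl, Matrix.one_apply_eq]
    rw [Complex.star_def, Complex.mul_conj, ← Complex.sq_norm, hf i]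
    norm_num
  · rw [if_neg, Matrix.one_apply_ne hii]
    intro hc
    exact hii (Fin.ext (col_inj_left hd' (lt_of_lt_of_le i.isLt hdd)
      (lt_of_lt_of_le i'.isLt hdd) hc))

lemma trace_conjTranspose_sh_mul (f : Fin d → ℂ) (t : ℕ) (B : Matrix (Fin d) (Fin d') ℂ) :
    ((sh d d' hd' f t)ᴴ * B).trace = ∑ i, star (f i) * B i (col d' hd' i t) := by
  rw [Matrix.trace]
  simp only [Matrix.diag_apply, Matrix.mul_apply, conjTranspose_apply, sh, Matrix.of_apply]
  rw [Finset.sum_comm]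
  refine Finset.sum_congr rfl fun i _ => ?_
  simp only [apply_ite (star : ℂ → ℂ), star_zero, ite_mul, zero_mul]
  rw [Finset.sum_ite_eq' Finset.univ (col d' hd' (i : ℕ) t)
    (fun k => star (f i) * B i k)]
  simp

lemma trace_sh_sh (f g : Fin d → ℂ) (t s : ℕ) :
    ((sh d d' hd' f t)ᴴ * sh d d' hd' g s).trace
      = ∑ i : Fin d, if col d' hd' i.val t = col d' hd' i.val s then star (f i) * g i else 0 := by
  rw [trace_conjTranspose_sh_mul]
  refine Finset.sum_congr rfl fun i _ => ?_
  simp only [sh, Matrix.of_apply, mul_ite, mul_zero]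

lemma sum_pow_eq_zero {w : ℂ} (hw : w ≠ 1) {n : ℕ} (hwn : w ^ n = 1) :
    ∑ i : Fin n, w ^ (i : ℕ) = 0 := by
  rw [Fin.sum_univ_eq_sum_range, geom_sum_eq hw, hwn, sub_self, zero_div]

lemma vanish {n : ℕ} {z : ℂ} (hz : IsPrimitiveRoot z n) (u : Fin n → ℂ)
    (h : ∀ k : Fin n, ∑ i : Fin n, z ^ ((k : ℕ) * (i : ℕ)) * u i = 0) : u = 0 := by
  apply Matrix.eq_zero_of_forall_index_sum_pow_mul_eq_zero
    (f := fun k : Fin n => z ^ (k : ℕ))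
  · intro a b hab
    exact Fin.ext (hz.pow_inj a.isLt b.isLt hab)
  · intro k
    simpa [← pow_mul] using h k

end UMEBAux


open UMEBAux

/-- if there exists an `m×d` partial Hadamard matrix (`m < d`) that
cannot be extended to an `(m+1)×d` partial Hadamard matrix (i.e., no unimodular vector
is orthogonal to all of its rows), then there exists a `(d(d'-1)+m)`-number USV1Bd
(that is, a `(d(d'-1)+m)`-number UMEB) in `M_{d×d'}`, for any `d' ≥ d`. -/
theorem umeb_from_unextendible_hadamard (d d' m : ℕ)
    (hd : 2 ≤ d) (hdd : d ≤ d') (hm1 : 1 ≤ m) (hm2 : m < d)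
    (h : ∃ H : Matrix (Fin m) (Fin d) ℂ,
      (∀ y j, ‖H y j‖ = 1) ∧
      (∀ y y' : Fin m, y ≠ y' → ∑ j, (starRingEnd ℂ) (H y j) * H y' j = 0) ∧
      ¬ ∃ v : Fin d → ℂ, (∀ i, ‖v i‖ = 1) ∧
          (∀ y : Fin m, ∑ j, (starRingEnd ℂ) (H y j) * v j = 0)) :
    ∃ A : Fin (d * (d' - 1) + m) → Matrix (Fin d) (Fin d') ℂ,
      (∀ i, A i * (A i)ᴴ = 1) ∧
      (∀ i j, ((A i)ᴴ * A j).trace = if i = j then (d : ℂ) else 0) ∧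
      (∀ B : Matrix (Fin d) (Fin d') ℂ,
        (∀ i, ((A i)ᴴ * B).trace = 0) → ¬ (B * Bᴴ = 1)) := by
  obtain ⟨H, hH1, hH2, hH3⟩ := h
  have hd0 : 0 < d := by omega
  have hd'0 : 0 < d' := by omega
  set ζ : ℂ := Complex.exp (2 * Real.pi * Complex.I / d) with hζdef
  have hζ : IsPrimitiveRoot ζ d := Complex.isPrimitiveRoot_exp d (by omega)
  have hζabs : ‖ζ‖ = 1 := hζ.norm'_eq_one (by omega)
  have hstar : star ζ * ζ = 1 := by
    rw [Complex.star_def, ← Complex.normSq_eq_conj_mul_self, ← Complex.sq_norm, hζabs]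
    norm_num
  have hstarprim : IsPrimitiveRoot (star ζ) d := by
    have : star ζ = ζ⁻¹ := eq_inv_of_mul_eq_one_left hstar
    rw [this]; exact hζ.inv
  -- the row functions
  set χ : Fin d → Fin d → ℂ := fun n i => ζ ^ ((n : ℕ) * (i : ℕ)) with hχdef
  have hχabs : ∀ n i, ‖χ n i‖ = 1 := by
    intro n i; rw [hχdef]; simp [map_pow, hζabs]
  -- index equivalence
  set e : (Fin d × Fin (d' - 1)) ⊕ Fin m ≃ Fin (d * (d' - 1) + m) :=
    (Equiv.sumCongr finProdFinEquiv (Equiv.refl _)).trans finSumFinEquiv with hedef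
  -- the family, indexed by the sum type
  set F : (Fin d × Fin (d' - 1)) ⊕ Fin m → Matrix (Fin d) (Fin d') ℂ := fun x =>
    match x with
    | .inl (n, t) => sh d d' hd'0 (χ n) (t : ℕ)
    | .inr y => sh d d' hd'0 (H y) (d' - 1) with hFdef
  have hdiagsum : ∀ f : Fin d → ℂ, (∀ i, ‖f i‖ = 1) →
      ∑ i : Fin d, star (f i) * f i = (d : ℂ) := by
    intro f hf
    have : ∀ i : Fin d, star (f i) * f i = 1 := by
      intro i
      rw [Complex.star_def, ← Complex.normSq_eq_conj_mul_self, ← Complex.sq_norm, hf i]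
      norm_num
    rw [Finset.sum_congr rfl fun i _ => this i]
    simp
  -- claim: pairwise traces on the sum type
  have htr : ∀ x y, ((F x)ᴴ * F y).trace = if x = y then (d : ℂ) else 0 := by
    rintro (⟨n, t⟩ | y) (⟨n', t'⟩ | y')
    · rw [hFdef]
      show ((sh d d' hd'0 (χ n) (t : ℕ))ᴴ * sh d d' hd'0 (χ n') (t' : ℕ)).trace = _
      rw [trace_sh_sh]
      by_cases ht : t = t'
      · subst ht
        rw [Finset.sum_congr rfl fun i _ => if_pos rfl]
        by_cases hn : n = n'
        · subst hn
          rw [if_pos rfl]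
          exact hdiagsum (χ n) (hχabs n)
        · rw [if_neg (show ¬ (Sum.inl (α := Fin d × Fin (d'-1)) (β := Fin m) (n, t)
              = Sum.inl (n', t)) by simp [hn])]
          have key : ∀ i : Fin d, star (χ n i) * χ n' i
              = ((star ζ) ^ (n : ℕ) * ζ ^ (n' : ℕ)) ^ (i : ℕ) := by
            intro i
            rw [hχdef]
            simp only [mul_pow, ← pow_mul, star_pow]
          rw [Finset.sum_congr rfl fun i _ => key i]
          apply sum_pow_eq_zero
          · intro hw
            apply hn
            have h2 : ζ ^ (n' : ℕ) = ζ ^ (n : ℕ) := by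
              have h3 := congrArg (· * ζ ^ (n : ℕ)) hw
              simp only [one_mul] at h3
              calc ζ ^ (n' : ℕ) = ((star ζ) ^ (n : ℕ) * ζ ^ (n : ℕ)) * ζ ^ (n' : ℕ) := by
                    rw [← mul_pow, hstar, one_pow, one_mul]
                _ = (star ζ) ^ (n : ℕ) * ζ ^ (n' : ℕ) * ζ ^ (n : ℕ) := by ring
                _ = ζ ^ (n : ℕ) := h3
            exact Fin.ext (hζ.pow_inj n'.isLt n.isLt h2).symm
          · rw [mul_pow, ← pow_mul, ← pow_mul, mul_comm (n : ℕ) d, mul_comm (n' : ℕ) d,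
              pow_mul, pow_mul, ← star_pow, hζ.pow_eq_one]
            simp
      · rw [Finset.sum_eq_zero, if_neg (by simp [ht])]
        intro i _
        rw [if_neg]
        intro hc
        exact ht (Fin.ext (col_inj_right hd'0 (lt_of_lt_of_le t.isLt (Nat.sub_le d' 1))
          (lt_of_lt_of_le t'.isLt (Nat.sub_le d' 1)) hc))
    · rw [hFdef]
      show ((sh d d' hd'0 (χ n) (t : ℕ))ᴴ * sh d d' hd'0 (H y') (d' - 1)).trace = _
      rw [trace_sh_sh, Finset.sum_eq_zero, if_neg (by simp)]
      intro i _
      rw [if_neg]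
      intro hc
      have := col_inj_right hd'0 (lt_of_lt_of_le t.isLt (Nat.sub_le d' 1))
        (by omega) hc
      omega
    · rw [hFdef]
      show ((sh d d' hd'0 (H y) (d' - 1))ᴴ * sh d d' hd'0 (χ n') (t' : ℕ)).trace = _
      rw [trace_sh_sh, Finset.sum_eq_zero, if_neg (by simp)]
      intro i _
      rw [if_neg]
      intro hc
      have := col_inj_right hd'0 (by omega)
        (lt_of_lt_of_le t'.isLt (Nat.sub_le d' 1)) hc
      omega
    · rw [hFdef]
      show ((sh d d' hd'0 (H y) (d' - 1))ᴴ * sh d d' hd'0 (H y') (d' - 1)).trace = _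
      rw [trace_sh_sh]
      simp only [if_pos rfl]
      by_cases hy : y = y'
      · subst hy
        rw [if_pos rfl]
        exact hdiagsum (H y) (hH1 y)
      · rw [if_neg (by simp [hy])]
        simpa [Complex.star_def] using hH2 y y' hy
  refine ⟨fun i => F (e.symm i), ?_, ?_, ?_⟩
  · intro i
    show F (e.symm i) * (F (e.symm i))ᴴ = 1
    obtain (⟨n, t⟩ | y) := e.symm i
    · exact sh_mul_conjTranspose hd'0 hdd (χ n) (hχabs n) (t : ℕ)
    · exact sh_mul_conjTranspose hd'0 hdd (H y) (hH1 y) (d' - 1)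
  · intro i j
    show ((F (e.symm i))ᴴ * F (e.symm j)).trace = _
    rw [htr]
    rw [if_congr e.symm.injective.eq_iff rfl rfl]
  · intro B hB hBB
    -- columns of shifts 0..d'-2 vanish
    have hzero : ∀ t : Fin (d' - 1), ∀ i : Fin d, B i (col d' hd'0 i (t : ℕ)) = 0 := by
      intro t
      have hvan : (fun i : Fin d => B i (col d' hd'0 i (t : ℕ))) = 0 := by
        apply vanish hstarprim
        intro n
        have h0 : ((F (e.symm (e (Sum.inl (n, t)))))ᴴ * B).trace = 0 := hB _
        rw [Equiv.symm_apply_apply] at h0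
        rw [hFdef] at h0
        have h1 : ((sh d d' hd'0 (χ n) (t : ℕ))ᴴ * B).trace = 0 := h0
        rw [trace_conjTranspose_sh_mul] at h1
        simpa [hχdef, star_pow] using h1
      intro i
      exact congrFun hvan i
    set v : Fin d → ℂ := fun i => B i (col d' hd'0 i (d' - 1)) with hvdef
    have hBform : ∀ (i : Fin d) (j : Fin d'),
        B i j = if j = col d' hd'0 (i : ℕ) (d' - 1) then v i else 0 := by
      intro i j
      obtain ⟨t, ht, hcol⟩ := col_surj hd'0 (i : ℕ) (lt_of_lt_of_le i.isLt hdd) j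
      by_cases hj : j = col d' hd'0 (i : ℕ) (d' - 1)
      · rw [if_pos hj, hj, hvdef]
      · rw [if_neg hj]
        have htne : t ≠ d' - 1 := by
          intro hteq
          exact hj (by rw [← hcol, hteq])
        have ht2 : t < d' - 1 := by omega
        have := hzero ⟨t, ht2⟩ i
        rw [← hcol]
        simpa using this
    -- unimodularity of v
    have hvabs : ∀ i, ‖v i‖ = 1 := by
      intro i
      have h1 : (B * Bᴴ) i i = 1 := by rw [hBB]; simp
      rw [Matrix.mul_apply] at h1
      simp only [conjTranspose_apply] at h1
      rw [Finset.sum_congr rfl (fun j _ => by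
        rw [hBform i j, apply_ite (star : ℂ → ℂ), star_zero])] at h1
      rw [sum_ite_ite _ _ (v i) (star (v i)), if_pos rfl] at h1
      rw [Complex.star_def, Complex.mul_conj] at h1
      have h2 : Complex.normSq (v i) = 1 := by exact_mod_cast h1
      have h3 : ‖v i‖ ^ 2 = 1 := by rw [Complex.sq_norm, h2]
      nlinarith [norm_nonneg (v i)]
    -- orthogonality to the Hadamard rows
    apply hH3
    refine ⟨v, hvabs, fun y => ?_⟩
    have h0 : ((F (e.symm (e (Sum.inr y))))ᴴ * B).trace = 0 := hB _
    rw [Equiv.symm_apply_apply] at h0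
    rw [hFdef] at h0
    have h1 : ((sh d d' hd'0 (H y) (d' - 1))ᴴ * B).trace = 0 := h0
    rw [trace_conjTranspose_sh_mul] at h1
    simpa [Complex.star_def, hvdef] using h1
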